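/- arXiv:2604.23652 — 2 statements merged into one kernel-verified Lean document; each statement's English description precedes it below -/
import Mathlib

section
/- Let γ ≥ 1 and Π as above. For every ρ ≥ 4 one has Π(ρ) ≥ c(γ) ρ^γ, where c(γ) = Π(4)/4^γ, i.e. c(γ) = log 4 - 3/4 if γ = 1 and c(γ) = (4^γ - 1 - 3γ)/((γ-1) 4^γ) if γ > 1. Moreover c(γ) > 0. -/
/-- The relative internal energy density. -/
noncomputable def relEnergy (γ : ℝ) (ρ : ℝ) : ℝ :=
  if γ = 1 then ρ * Real.log ρ - ρ + 1
  else (ρ ^ γ - 1 - γ * (ρ - 1)) / (γ - 1)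

/-- The coercivity constant `c(γ) = Π(4)/4^γ`. -/
noncomputable def cHigh (γ : ℝ) : ℝ :=
  if γ = 1 then Real.log 4 - 3 / 4
  else ((4 : ℝ) ^ γ - 1 - 3 * γ) / ((γ - 1) * (4 : ℝ) ^ γ)

theorem stmt_3 (γ : ℝ) (hγ : 1 ≤ γ) :
    cHigh γ = relEnergy γ 4 / (4 : ℝ) ^ γ ∧
    0 < cHigh γ ∧
    ∀ ρ : ℝ, 4 ≤ ρ → cHigh γ * ρ ^ γ ≤ relEnergy γ ρ := by
  rcases eq_or_lt_of_le hγ with h1 | h1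
  · -- γ = 1
    subst h1
    simp only [relEnergy, cHigh, if_pos rfl, Real.rpow_one, if_true]
    refine ⟨by ring, ?_, ?_⟩
    · have h2 : (0.6931471803 : ℝ) < Real.log 2 := Real.log_two_gt_d9
      have h4 : Real.log 4 = 2 * Real.log 2 := by
        rw [show (4:ℝ) = 2^2 by norm_num, Real.log_pow]; push_cast; ring
      nlinarith
    · intro ρ hρ
      have hρ0 : (0:ℝ) < ρ := by linarith
      have hlog : Real.log (4/ρ) ≤ 4/ρ - 1 :=
        Real.log_le_sub_one_of_pos (by positivity)
      rw [Real.log_div (by norm_num) (ne_of_gt hρ0)] at hlog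
      have : ρ * (Real.log 4 - Real.log ρ) ≤ ρ * (4/ρ - 1) := by
        apply mul_le_mul_of_nonneg_left hlog hρ0.le
      have h4ρ : ρ * (4/ρ - 1) = 4 - ρ := by field_simp
      rw [h4ρ, mul_sub] at this
      nlinarith
  · -- 1 < γ
    have hne : γ ≠ 1 := ne_of_gt h1
    have hγ1 : (0:ℝ) < γ - 1 := by linarith
    have hA : (0:ℝ) < (4:ℝ) ^ γ := Real.rpow_pos_of_pos (by norm_num) γ
    have hnum : 1 + 3 * γ < (4:ℝ) ^ γ := by
      have := one_add_mul_self_lt_rpow_one_add (s := 3) (by norm_num) (by norm_num) h1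
      norm_num at this
      linarith
    simp only [relEnergy, cHigh, if_neg hne]
    refine ⟨?_, ?_, ?_⟩
    · rw [div_div]
      congr 1
      ring
    · apply div_pos (by linarith) (by positivity)
    · intro ρ hρ
      have hρ0 : (0:ℝ) < ρ := by linarith
      set t : ℝ := ρ / 4 with ht
      have ht1 : (1:ℝ) ≤ t := by rw [ht]; linarith
      have hBer : 1 + γ * (t - 1) ≤ t ^ γ := by
        have := one_add_mul_self_le_rpow_one_add (s := t - 1) (by linarith) h1.le
        simpa using this
      have hsplit : ρ ^ γ = (4:ℝ) ^ γ * t ^ γ := by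
        rw [ht, Real.div_rpow hρ0.le (by norm_num), mul_div_cancel₀]
        exact ne_of_gt hA
      rw [le_div_iff₀ hγ1, hsplit]
      have hρt : ρ = 4 * t := by rw [ht]; ring
      rw [hρt]
      have htpos : (0:ℝ) < t ^ γ := Real.rpow_pos_of_pos (by linarith) γ
      rw [div_mul_eq_mul_div, div_mul_eq_mul_div, div_le_iff₀ (by positivity)]
      nlinarith [mul_le_mul_of_nonneg_left hBer (by linarith : (0:ℝ) ≤ 1 + 3*γ),
        mul_le_mul_of_nonneg_left hBer hA.le, mul_pos hγ1 hA,
        mul_nonneg (mul_nonneg hγ1.le (by linarith : (0:ℝ) ≤ t - 1)) (by linarith : (0:ℝ) ≤ γ)]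
end

section
/- Fix N ∈ {2,3} and real numbers ν > 0, c with 0 < 2ν - c ≤ c, and α with (N-1)/N < α < 1. For any N×N real matrix A define Q(A) = ν|A|² + (ν - c)(A : Aᵀ) + (α-1)(2ν-c)(tr A)², where A : B = Σ A_{ij} B_{ij} and |A|² = A : A. Then Q(A) ≥ (2ν - c)(Nα - N + 1)|A|² for all A. -/
theorem stmt_4 (N : ℕ) (hN : N = 2 ∨ N = 3) (ν c α : ℝ) (hν : 0 < ν)
    (hc1 : 0 < 2 * ν - c) (hc2 : 2 * ν - c ≤ c)
    (hα1 : ((N : ℝ) - 1) / N < α) (hα2 : α < 1)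
    (A : Matrix (Fin N) (Fin N) ℝ) :
    (2 * ν - c) * ((N : ℝ) * α - N + 1) * (∑ i, ∑ j, A i j * A i j) ≤
      ν * (∑ i, ∑ j, A i j * A i j)
        + (ν - c) * (∑ i, ∑ j, A i j * A j i)
        + (α - 1) * (2 * ν - c) * (Matrix.trace A) ^ 2 := by
  have hn : (0:ℝ) < (N:ℝ) := by rcases hN with h | h <;> simp [h]
  set S := ∑ i, ∑ j, A i j * A i j with hS
  set T := ∑ i, ∑ j, A i j * A j i with hT
  have hswap : ∑ i, ∑ j, A j i * A j i = S := Finset.sum_comm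
  -- S - T ≥ 0
  have expand1 : ∑ i, ∑ j, (A i j - A j i)^2
      = (∑ i, ∑ j, A i j * A i j) + (∑ i, ∑ j, A j i * A j i)
        - 2 * (∑ i, ∑ j, A i j * A j i) := by
    rw [Finset.mul_sum, ← Finset.sum_add_distrib, ← Finset.sum_sub_distrib]
    refine Finset.sum_congr rfl fun i _ => ?_
    rw [Finset.mul_sum, ← Finset.sum_add_distrib, ← Finset.sum_sub_distrib]
    exact Finset.sum_congr rfl fun j _ => by ring
  have h1 : T ≤ S := by
    have hpos : (0:ℝ) ≤ ∑ i, ∑ j, (A i j - A j i)^2 := by positivity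
    rw [expand1, hswap] at hpos
    linarith
  -- S + T ≥ 2 * sum of diagonal squares
  have expand2 : ∑ i, ∑ j, (A i j + A j i)^2
      = (∑ i, ∑ j, A i j * A i j) + (∑ i, ∑ j, A j i * A j i)
        + 2 * (∑ i, ∑ j, A i j * A j i) := by
    rw [Finset.mul_sum, ← Finset.sum_add_distrib, ← Finset.sum_add_distrib]
    refine Finset.sum_congr rfl fun i _ => ?_
    rw [Finset.mul_sum, ← Finset.sum_add_distrib, ← Finset.sum_add_distrib]
    exact Finset.sum_congr rfl fun j _ => by ring
  have hdiag : ∑ i, (A i i + A i i)^2 ≤ ∑ i, ∑ j, (A i j + A j i)^2 := by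
    refine Finset.sum_le_sum fun i _ => ?_
    exact Finset.single_le_sum (f := fun j => (A i j + A j i)^2)
      (fun j _ => sq_nonneg _) (Finset.mem_univ i)
  have hdiag2 : 4 * ∑ i, (A i i)^2 ≤ 2 * S + 2 * T := by
    have e : ∑ i, (A i i + A i i)^2 = 4 * ∑ i, (A i i)^2 := by
      rw [Finset.mul_sum]; exact Finset.sum_congr rfl fun i _ => by ring
    rw [e, expand2, hswap] at hdiag
    linarith
  -- trace
  have htr : Matrix.trace A = ∑ i, A i i := rfl
  have hcs : (∑ i, A i i)^2 ≤ (N:ℝ) * ∑ i, (A i i)^2 := by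
    have := sq_sum_le_card_mul_sum_sq (s := (Finset.univ : Finset (Fin N)))
      (f := fun i => A i i)
    simpa using this
  have h2 : 2 * (Matrix.trace A)^2 ≤ (N:ℝ) * (S + T) := by
    rw [htr]
    have := mul_le_mul_of_nonneg_left hdiag2 (le_of_lt hn)
    linarith
  -- useful scalar bounds
  have hα1' : (N:ℝ) - 1 < N * α := by
    rw [div_lt_iff₀ hn] at hα1; linarith
  have hα3 : (N:ℝ) * α - N + 1 ≤ 1 := by nlinarith
  have hα4 : 0 < (N:ℝ) * α - N + 1 := by linarith
  have hlam : 0 ≤ c - (2 * ν - c) * ((N:ℝ) * α - N + 1) := by nlinarith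
  have F1 : 0 ≤ (1 - α) * (2 * ν - c) * ((N:ℝ) * (S + T) / 2 - (Matrix.trace A)^2) := by
    apply mul_nonneg (mul_nonneg (by linarith) (by linarith))
    linarith
  have F2 : 0 ≤ (c - (2 * ν - c) * ((N:ℝ) * α - N + 1)) * (S - T) :=
    mul_nonneg hlam (by linarith)
  linarith [F1, F2]
end
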